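/- arXiv:1107.1820 — 3 statements merged into one kernel-verified Lean document; each statement's English description precedes it below -/
import Mathlib

section
/- Let q be a prime power and let U be a set of q^3 + 1 points in PG(2, q^2) such that every line meets U in 1 or q+1 points. Then the points of U together with the intersections of secant lines with U form a 2-(q^3+1, q+1, 1) design: any two distinct points of U lie on exactly one line meeting U in q+1 points, and the number of secant lines is q^2(q^2 − q + 1). -/
open Module Projectivization

lemma sup_rank_two' {K V : Type*} [Field K] [AddCommGroup V] [Module K V] [FiniteDimensional K V]
    {P Q : Projectivization K V} (h : P ≠ Q) :
    finrank K ↥(P.submodule ⊔ Q.submodule) = 2 := by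
  have hne : P.submodule ≠ Q.submodule := fun e => h (Projectivization.submodule_injective e)
  have hinf : P.submodule ⊓ Q.submodule = ⊥ := by
    by_contra hb
    have h1 : finrank K ↥(P.submodule ⊓ Q.submodule) ≤ 1 := by
      rw [← P.finrank_submodule]
      exact Submodule.finrank_mono inf_le_left
    have h0 : finrank K ↥(P.submodule ⊓ Q.submodule) ≠ 0 := by
      simpa [Submodule.finrank_eq_zero] using hb
    have h1' : finrank K ↥(P.submodule ⊓ Q.submodule) = 1 := by omega
    have eP : P.submodule ⊓ Q.submodule = P.submodule :=
      Submodule.eq_of_le_of_finrank_eq inf_le_left (by rw [h1', P.finrank_submodule])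
    have eQ : P.submodule ⊓ Q.submodule = Q.submodule :=
      Submodule.eq_of_le_of_finrank_eq inf_le_right (by rw [h1', Q.finrank_submodule])
    exact hne (eP ▸ eQ)
  have := Submodule.finrank_sup_add_finrank_inf_eq P.submodule Q.submodule
  rw [hinf, P.finrank_submodule, Q.finrank_submodule] at this
  simpa using this

/-- If `U` is a unital embedded in `PG(2, q²)`, then `U` with the secant-line
intersections forms a `2-(q³+1, q+1, 1)` design: any two distinct points of `U`
lie on exactly one secant line, and the number of secant lines is `q²(q² − q + 1)`. -/
theorem unital_design (q : ℕ) (hq : ∃ (p n : ℕ), p.Prime ∧ 0 < n ∧ q = p ^ n)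
    (K : Type*) [Field K] [Fintype K] (hK : Fintype.card K = q ^ 2)
    (U : Set (Projectivization K (Fin 3 → K)))
    (hU : Nat.card U = q ^ 3 + 1)
    (hline : ∀ L : Submodule K (Fin 3 → K), Module.finrank K L = 2 →
      Nat.card {P : Projectivization K (Fin 3 → K) | P ∈ U ∧ P.submodule ≤ L} = 1 ∨
      Nat.card {P : Projectivization K (Fin 3 → K) | P ∈ U ∧ P.submodule ≤ L} = q + 1) :
    (∀ P ∈ U, ∀ Q ∈ U, P ≠ Q →
      Nat.card {L : Submodule K (Fin 3 → K) | Module.finrank K L = 2 ∧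
          P.submodule ≤ L ∧ Q.submodule ≤ L ∧
          Nat.card {R : Projectivization K (Fin 3 → K) | R ∈ U ∧ R.submodule ≤ L} = q + 1}
        = 1) ∧
    Nat.card {L : Submodule K (Fin 3 → K) | Module.finrank K L = 2 ∧
        Nat.card {R : Projectivization K (Fin 3 → K) | R ∈ U ∧ R.submodule ≤ L} = q + 1}
      = q ^ 2 * (q ^ 2 - q + 1) := by
  classical
  have hq2 : 2 ≤ q := by
    obtain ⟨p, n, hp, hn, rfl⟩ := hq
    exact Nat.one_lt_pow hn.ne' hp.one_lt
  haveI : Finite (Projectivization K (Fin 3 → K)) := Quotient.finite _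
  haveI : Fintype (Projectivization K (Fin 3 → K)) := Fintype.ofFinite _
  haveI : Finite (Submodule K (Fin 3 → K)) := Finite.of_injective _ SetLike.coe_injective
  haveI : Fintype (Submodule K (Fin 3 → K)) := Fintype.ofFinite _
  -- key: the line through two distinct points of U is a secant
  have key : ∀ P ∈ U, ∀ Q ∈ U, P ≠ Q →
      Nat.card {R : Projectivization K (Fin 3 → K) |
        R ∈ U ∧ R.submodule ≤ P.submodule ⊔ Q.submodule} = q + 1 := by
    intro P hP Q hQ hPQ
    have h2 := sup_rank_two' hPQ
    rcases hline _ h2 with h1 | h1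
    · exfalso
      have hlt : 1 < Nat.card {R : Projectivization K (Fin 3 → K) |
          R ∈ U ∧ R.submodule ≤ P.submodule ⊔ Q.submodule} := by
        rw [Nat.card_coe_set_eq]
        rw [Set.one_lt_ncard_iff (Set.toFinite _)]
        exact ⟨P, Q, ⟨hP, le_sup_left⟩, ⟨hQ, le_sup_right⟩, hPQ⟩
      omega
    · exact h1
  -- uniqueness of the secant through two points
  have uniq : ∀ (P Q : Projectivization K (Fin 3 → K)), P ≠ Q →
      ∀ L : Submodule K (Fin 3 → K), Module.finrank K L = 2 →
      P.submodule ≤ L → Q.submodule ≤ L → L = P.submodule ⊔ Q.submodule := by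
    intro P Q hPQ L hL hPL hQL
    exact (Submodule.eq_of_le_of_finrank_eq (sup_le hPL hQL)
      (by rw [sup_rank_two' hPQ, hL])).symm
  constructor
  · intro P hP Q hQ hPQ
    have hset : {L : Submodule K (Fin 3 → K) | Module.finrank K L = 2 ∧
        P.submodule ≤ L ∧ Q.submodule ≤ L ∧
        Nat.card {R : Projectivization K (Fin 3 → K) | R ∈ U ∧ R.submodule ≤ L} = q + 1}
        = {P.submodule ⊔ Q.submodule} := by
      ext L
      simp only [Set.mem_setOf_eq, Set.mem_singleton_iff]
      constructor
      · rintro ⟨h2, hPL, hQL, -⟩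
        exact uniq P Q hPQ L h2 hPL hQL
      · rintro rfl
        exact ⟨sup_rank_two' hPQ, le_sup_left, le_sup_right, key P hP Q hQ hPQ⟩
    rw [hset, Nat.card_coe_set_eq, Set.ncard_singleton]
  · -- counting the secants
    set f : (Projectivization K (Fin 3 → K)) × (Projectivization K (Fin 3 → K)) →
        Submodule K (Fin 3 → K) := fun pq => pq.1.submodule ⊔ pq.2.submodule with hf
    set S : Set (Submodule K (Fin 3 → K)) := {L | Module.finrank K L = 2 ∧
        Nat.card {R : Projectivization K (Fin 3 → K) | R ∈ U ∧ R.submodule ≤ L} = q + 1}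
      with hS
    set sF := U.toFinset.offDiag with hsF
    set tF := S.toFinset with htF
    have hUcard : U.toFinset.card = q ^ 3 + 1 := by
      rw [← Set.ncard_eq_toFinset_card', ← Nat.card_coe_set_eq, hU]
    have hmap : ∀ pq ∈ sF, f pq ∈ tF := by
      rintro ⟨P, Q⟩ hpq
      rw [hsF, Finset.mem_offDiag] at hpq
      obtain ⟨hP, hQ, hne⟩ := hpq
      rw [Set.mem_toFinset] at hP hQ
      rw [htF, Set.mem_toFinset]
      exact ⟨sup_rank_two' hne, key P hP Q hQ hne⟩
    have hsum := Finset.card_eq_sum_card_fiberwise hmap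
    have hfiber : ∀ L ∈ tF, (sF.filter fun pq => f pq = L).card = (q + 1) * q := by
      intro L hL
      rw [htF, Set.mem_toFinset, hS] at hL
      obtain ⟨hL2, hLc⟩ := hL
      have hfe : (sF.filter fun pq => f pq = L) =
          ({R : Projectivization K (Fin 3 → K) | R ∈ U ∧ R.submodule ≤ L}).toFinset.offDiag := by
        ext ⟨P, Q⟩
        simp only [Finset.mem_filter, hsF, Finset.mem_offDiag, Set.mem_toFinset,
          Set.mem_setOf_eq, hf]
        constructor
        · rintro ⟨⟨hP, hQ, hne⟩, heq⟩
          exact ⟨⟨hP, heq ▸ le_sup_left⟩, ⟨hQ, heq ▸ le_sup_right⟩, hne⟩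
        · rintro ⟨⟨hP, hPL⟩, ⟨hQ, hQL⟩, hne⟩
          exact ⟨⟨hP, hQ, hne⟩, (uniq P Q hne L hL2 hPL hQL).symm⟩
      rw [hfe, Finset.offDiag_card]
      have hc : ({R : Projectivization K (Fin 3 → K) |
          R ∈ U ∧ R.submodule ≤ L}).toFinset.card = q + 1 := by
        rw [← Set.ncard_eq_toFinset_card', ← Nat.card_coe_set_eq, hLc]
      rw [hc]
      have : (q + 1) * (q + 1) = (q + 1) * q + (q + 1) := by ring
      omega
    rw [Finset.sum_congr rfl hfiber, Finset.sum_const, smul_eq_mul,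
      Finset.offDiag_card, hUcard] at hsum
    have htc : Nat.card ↥S = tF.card := by
      rw [Nat.card_coe_set_eq, Set.ncard_eq_toFinset_card']
    rw [htc]
    -- arithmetic
    have hqle : q ≤ q ^ 2 := Nat.le_self_pow (by norm_num) q
    have h5 : (q + 1) * q = q ^ 2 + q := by ring
    have h2 : (q + 1) * ((q ^ 2 - q + 1) + q) = (q + 1) * (q ^ 2 + 1) := by
      congr 1; omega
    have h3 : (q + 1) * (q ^ 2 + 1) = q ^ 3 + q ^ 2 + q + 1 := by ring
    have h4 : (q + 1) * ((q ^ 2 - q + 1) + q) = (q + 1) * (q ^ 2 - q + 1) + (q + 1) * q := by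
      ring
    have hA1 : (q + 1) * (q ^ 2 - q + 1) = q ^ 3 + 1 := by omega
    have hlhs : q ^ 2 * (q ^ 2 - q + 1) * ((q + 1) * q) = (q ^ 3 + 1) * q ^ 3 := by
      calc q ^ 2 * (q ^ 2 - q + 1) * ((q + 1) * q)
          = ((q + 1) * (q ^ 2 - q + 1)) * (q ^ 2 * q) := by ring
        _ = (q ^ 3 + 1) * q ^ 3 := by rw [hA1]; ring
    have hrhs : (q ^ 3 + 1) * (q ^ 3 + 1) - (q ^ 3 + 1) = (q ^ 3 + 1) * q ^ 3 := by
      have : (q ^ 3 + 1) * (q ^ 3 + 1) = (q ^ 3 + 1) * q ^ 3 + (q ^ 3 + 1) := by ring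
      omega
    have hpos : 0 < (q + 1) * q := by positivity
    apply Nat.eq_of_mul_eq_mul_right hpos
    rw [hlhs, ← hsum, hrhs]
end

section
/- Let p be a prime, q = p^t, and let b_0, ..., b_n be integers with 0 ≤ b_i ≤ q^2 − 1, not all zero, such that (q^2 − 1) divides b_0 + ... + b_n. Writing each b_i in base p as b_i = Σ_j a_{i,j} p^j and setting λ_j = Σ_i a_{i,j} and s_j = (1/(q^2−1)) Σ_i (p^(2t−j) b_i mod (q^2−1)), one has Σ_{j=0}^{2t−1} λ_j = (p−1) Σ_{j=0}^{2t−1} s_j; equivalently the total base-p digit sum Σ_i σ_p(b_i) equals (p−1) times the sum of the H-type entries. -/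
open Finset

private lemma geom_nat (p : ℕ) (hp : 1 ≤ p) (n : ℕ) :
    (p - 1) * ∑ m ∈ range n, p ^ m = p ^ n - 1 := by
  induction n with
  | zero => simp
  | succ n ih =>
    rw [Finset.sum_range_succ, Nat.mul_add, ih]
    have h1 : 1 ≤ p ^ n := Nat.one_le_pow _ _ hp
    have h2 : p ^ n ≤ p ^ (n + 1) := Nat.pow_le_pow_right hp (by omega)
    have h3 : (p - 1) * p ^ n = p ^ (n + 1) - p ^ n := by
      rw [Nat.sub_mul, one_mul, pow_succ, mul_comm]
    omega

private lemma digitB (p : ℕ) (hp : 2 ≤ p) :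
    ∀ n b, b < p ^ n →
      b = (Nat.digits p b).sum + (p - 1) * ∑ k ∈ range n, b / p ^ (k + 1) := by
  intro n
  induction n with
  | zero =>
    intro b hb
    simp only [pow_zero, Nat.lt_one_iff] at hb
    subst hb; simp
  | succ n ih =>
    intro b hb
    rcases Nat.eq_zero_or_pos b with rfl | hbpos
    · simp
    rw [Nat.digits_def' (by omega : 1 < p) hbpos]
    have hdiv : b / p < p ^ n := by
      rw [Nat.div_lt_iff_lt_mul (by omega : 0 < p)]
      calc b < p ^ (n + 1) := hb
        _ = p ^ n * p := pow_succ p n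
    have IH := ih (b / p) hdiv
    have hsum : ∑ k ∈ range (n + 1), b / p ^ (k + 1)
        = (∑ k ∈ range n, (b / p) / p ^ (k + 1)) + b / p := by
      rw [Finset.sum_range_succ']
      congr 1
      · apply Finset.sum_congr rfl
        intro k _
        rw [Nat.div_div_eq_div_mul, ← pow_succ']
      · simp
    rw [hsum]
    have hmd : b % p + p * (b / p) = b := Nat.mod_add_div b p
    obtain ⟨p', rfl⟩ : ∃ p', p = p' + 1 := ⟨p - 1, by omega⟩
    simp only [Nat.add_sub_cancel] at IH ⊢
    simp only [List.sum_cons]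
    rw [Nat.mul_add]
    rw [Nat.succ_mul] at hmd
    linarith [IH, hmd]

private lemma key_mod (p t : ℕ) (hp : 2 ≤ p) (m : ℕ) (hm1 : 1 ≤ m) (hm2 : m ≤ 2 * t)
    (b : ℕ) (hb1 : 1 ≤ b) (hb2 : b ≤ p ^ (2 * t) - 1) :
    (p ^ m * b - 1) % (p ^ (2 * t) - 1) + 1
      = p ^ m * (b % p ^ (2 * t - m)) + b / p ^ (2 * t - m) := by
  set N := p ^ (2 * t) - 1 with hN
  set k := 2 * t - m with hk
  have hmk : m + k = 2 * t := by omega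
  set x := b % p ^ k with hx
  set y := b / p ^ k with hy
  have hpk : 0 < p ^ k := pow_pos (by omega : 0 < p) _
  have hbxy : x + p ^ k * y = b := Nat.mod_add_div b (p ^ k)
  have hxlt : x < p ^ k := Nat.mod_lt b hpk
  have hprod : p ^ m * p ^ k = N + 1 := by
    rw [← pow_add, hmk, hN]
    have : 1 ≤ p ^ (2 * t) := Nat.one_le_pow _ _ (by omega)
    omega
  have hN1 : 1 ≤ N := by
    have h1 : p ≤ p ^ (2 * t) := Nat.le_self_pow (by omega) p
    omega
  have hylt : y < p ^ m := by
    rw [hy, Nat.div_lt_iff_lt_mul hpk]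
    have h2 : p ^ m * p ^ k = N + 1 := hprod
    omega
  have hvle : p ^ m * x + y ≤ N := by
    have h2 : p ^ m * (x + 1) ≤ p ^ m * p ^ k := Nat.mul_le_mul_left _ hxlt
    rw [Nat.mul_add, Nat.mul_one, hprod] at h2
    linarith
  have hv1 : 1 ≤ p ^ m * x + y := by
    rcases Nat.eq_zero_or_pos x with hx0 | hx0
    · have hy1 : 1 ≤ y := by
        rcases Nat.eq_zero_or_pos y with hy0 | hy0
        · exfalso; rw [hx0, hy0] at hbxy; simp at hbxy; omega
        · exact hy0
      calc 1 ≤ y := hy1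
        _ ≤ p ^ m * x + y := Nat.le_add_left _ _
    · have h1 : 1 ≤ p ^ m := Nat.one_le_pow _ _ (by omega)
      have h2 : p ^ m ≤ p ^ m * x := Nat.le_mul_of_pos_right _ hx0
      calc 1 ≤ p ^ m := h1
        _ ≤ p ^ m * x := h2
        _ ≤ p ^ m * x + y := Nat.le_add_right _ _
  set v := p ^ m * x + y with hv
  have key : p ^ m * b = v + N * y := by
    calc p ^ m * b = p ^ m * (x + p ^ k * y) := by rw [hbxy]
      _ = p ^ m * x + (p ^ m * p ^ k) * y := by ring
      _ = p ^ m * x + (N + 1) * y := by rw [hprod]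
      _ = v + N * y := by rw [hv]; ring
  rw [key]
  have h5 : v + N * y - 1 = (v - 1) + N * y := Nat.sub_add_comm hv1
  rw [h5, Nat.add_mul_mod_self_left, Nat.mod_eq_of_lt (by omega : v - 1 < N)]
  omega

private lemma per_b (p t : ℕ) (hp : 2 ≤ p) (ht : 0 < t) (b : ℕ)
    (hb1 : 1 ≤ b) (hb2 : b ≤ p ^ (2 * t) - 1) :
    (p ^ (2 * t) - 1) * (Nat.digits p b).sum
      = (p - 1) * ∑ j ∈ range (2 * t),
          ((p ^ (2 * t - j) * b - 1) % (p ^ (2 * t) - 1) + 1) := by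
  set N := p ^ (2 * t) - 1 with hN
  set g : ℕ → ℕ := fun m => p ^ m * (b % p ^ (2 * t - m)) + b / p ^ (2 * t - m) with hg
  have hp2t : 1 ≤ p ^ (2 * t) := Nat.one_le_pow _ _ (by omega)
  have hblt : b < p ^ (2 * t) := by omega
  -- Step 1: rewrite each summand via key_mod
  have step1 : ∑ j ∈ range (2 * t),
      ((p ^ (2 * t - j) * b - 1) % N + 1) = ∑ j ∈ range (2 * t), g (2 * t - j) := by
    apply Finset.sum_congr rfl
    intro j hj
    simp only [Finset.mem_range] at hj
    have := key_mod p t hp (2 * t - j) (by omega) (by omega) b hb1 hb2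
    rw [this]
  -- reflect
  have step2 : ∑ j ∈ range (2 * t), g (2 * t - j) = ∑ j ∈ range (2 * t), g (j + 1) := by
    rw [← Finset.sum_range_reflect (fun j => g (j + 1)) (2 * t)]
    apply Finset.sum_congr rfl
    intro j hj
    simp only [Finset.mem_range] at hj
    congr 1
    omega
  have hg2t : g (2 * t) = b := by
    simp only [hg]
    rw [Nat.sub_self, pow_zero, Nat.mod_one, Nat.div_one, Nat.mul_zero, Nat.zero_add]
  have hg0 : g 0 = b := by
    simp only [hg, Nat.sub_zero, pow_zero, one_mul]
    rw [Nat.mod_eq_of_lt hblt, Nat.div_eq_of_lt hblt, Nat.add_zero]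
  have step3 : ∑ j ∈ range (2 * t), g (j + 1) = ∑ m ∈ range (2 * t), g m := by
    have h1 : ∑ j ∈ range (2 * t + 1), g j
        = (∑ j ∈ range (2 * t), g (j + 1)) + g 0 := Finset.sum_range_succ' g (2 * t)
    have h2 : ∑ j ∈ range (2 * t + 1), g j
        = (∑ j ∈ range (2 * t), g j) + g (2 * t) := Finset.sum_range_succ g (2 * t)
    rw [hg0] at h1
    rw [hg2t] at h2
    omega
  -- Step 2: per-term identity g m + N * (b / p^(2t-m)) = p^m * b
  have hterm : ∀ m, m ≤ 2 * t → g m + N * (b / p ^ (2 * t - m)) = p ^ m * b := by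
    intro m hm
    have hprod : p ^ m * p ^ (2 * t - m) = N + 1 := by
      rw [← pow_add]
      have : m + (2 * t - m) = 2 * t := by omega
      rw [this, hN]
      omega
    have hbxy : b % p ^ (2 * t - m) + p ^ (2 * t - m) * (b / p ^ (2 * t - m)) = b :=
      Nat.mod_add_div b _
    calc g m + N * (b / p ^ (2 * t - m))
        = p ^ m * (b % p ^ (2 * t - m)) + (N + 1) * (b / p ^ (2 * t - m)) := by
          simp only [hg]; ring
      _ = p ^ m * (b % p ^ (2 * t - m)) + (p ^ m * p ^ (2 * t - m)) * (b / p ^ (2 * t - m)) := by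
          rw [hprod]
      _ = p ^ m * (b % p ^ (2 * t - m) + p ^ (2 * t - m) * (b / p ^ (2 * t - m))) := by ring
      _ = p ^ m * b := by rw [hbxy]
  set G := ∑ m ∈ range (2 * t), g m with hG
  set S := ∑ m ∈ range (2 * t), b / p ^ (2 * t - m) with hS
  set T := ∑ m ∈ range (2 * t), p ^ m with hT
  have hGNS : G + N * S = b * T := by
    rw [hG, hS, hT, Finset.mul_sum, ← Finset.sum_add_distrib, Finset.mul_sum]
    apply Finset.sum_congr rfl
    intro m hm
    simp only [Finset.mem_range] at hm
    rw [hterm m (by omega)]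
    ring
  -- S as standard sum
  have hSr : S = ∑ k ∈ range (2 * t), b / p ^ (k + 1) := by
    rw [hS, ← Finset.sum_range_reflect (fun k => b / p ^ (k + 1)) (2 * t)]
    apply Finset.sum_congr rfl
    intro j hj
    simp only [Finset.mem_range] at hj
    congr 2
    omega
  have hdig : b = (Nat.digits p b).sum + (p - 1) * S := by
    rw [hSr]
    exact digitB p hp (2 * t) b hblt
  have hgeom : (p - 1) * T = N := by
    rw [hT, hN]
    exact geom_nat p (by omega) (2 * t)
  -- combine
  rw [step1, step2, step3]
  have hchain : (p - 1) * G + (p - 1) * (N * S) = N * (Nat.digits p b).sum + (p - 1) * (N * S) := by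
    calc (p - 1) * G + (p - 1) * (N * S) = (p - 1) * (G + N * S) := by ring
      _ = (p - 1) * (b * T) := by rw [hGNS]
      _ = b * ((p - 1) * T) := by ring
      _ = b * N := by rw [hgeom]
      _ = ((Nat.digits p b).sum + (p - 1) * S) * N := by rw [← hdig]
      _ = N * (Nat.digits p b).sum + (p - 1) * (N * S) := by ring
  exact (Nat.add_right_cancel hchain).symm

open Finset in
/-- For exponents `b_0, …, b_n` in `{0, …, q²−1}`, not all zero, with sum divisible by
`q²−1`, the total base-`p` digit sum `Σ_i σ_p(b_i) = Σ_j λ_j` equals `(p−1)` times the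
sum `Σ_j s_j` of the `H`-type entries, where
`(q²−1)s_j = Σ_i (p^(2t−j) b_i mod (q²−1))` with the convention that the residue is
`q²−1` (not `0`) when `b_i = q²−1`, and `0` when `b_i = 0`. -/
theorem digit_sum_eq_p_sub_one_mul_sum_s (p t q n : ℕ) (hp : p.Prime) (ht : 0 < t)
    (hq : q = p ^ t) (b : Fin (n + 1) → ℕ)
    (hb : ∀ i, b i ≤ q ^ 2 - 1)
    (hne : ¬ ∀ i, b i = 0)
    (hdvd : (q ^ 2 - 1) ∣ ∑ i, b i)
    (M : Fin (n + 1) → ℕ → ℕ)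
    (hM : ∀ i j, M i j =
      if b i = 0 then 0 else (p ^ (2 * t - j) * b i - 1) % (q ^ 2 - 1) + 1) :
    (q ^ 2 - 1) * ∑ i, (Nat.digits p (b i)).sum =
      (p - 1) * ∑ j ∈ Finset.range (2 * t), ∑ i, M i j := by
  have hq2 : q ^ 2 = p ^ (2 * t) := by
    rw [hq, ← pow_mul, mul_comm]
  rw [Finset.sum_comm, Finset.mul_sum, Finset.mul_sum]
  apply Finset.sum_congr rfl
  intro i _
  rcases Nat.eq_zero_or_pos (b i) with h0 | hpos
  · simp [hM, h0]
  · have hbi : b i ≤ p ^ (2 * t) - 1 := by rw [← hq2]; exact hb i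
    have := per_b p t hp.two_le ht (b i) hpos hbi
    rw [← hq2] at this
    rw [this]
    congr 1
    apply Finset.sum_congr rfl
    intro j _
    rw [hM i j, if_neg (by omega)]
end

section
/- Let p be a prime, t ≥ 1, q = p^t, and suppose nonnegative integers k_1, ..., k_5 sum to 2(q^2 − q). Fix j with 1 ≤ j ≤ t and suppose that in the base-p addition k_1 + ... + k_5 = 2(q^2 − q) there is no carry into the j-th digit position and no carry into the (j+t)-th digit position. Then Σ_{i=1}^5 ((p^(t−j) k_i mod (q^2−1)) + (p^(2t−j) k_i mod (q^2−1))) = q^2 − 1, where each 'mod' denotes the least nonnegative residue. -/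
set_option maxHeartbeats 1000000 in
open Finset in
lemma aux_no_carry (u v : ℕ) (hu2 : 2 ≤ u) (hv1 : 1 ≤ v) (k : Fin 5 → ℕ)
    (hk : ∑ i, k i = 2 * (u * v * (u * v) - u * v))
    (h1 : ∑ i, k i % u < u)
    (h2 : ∑ i, k i % (u * (u * v)) < u * (u * v)) :
    ∑ i, (v * k i % (u * v * (u * v) - 1) + u * v * v * k i % (u * v * (u * v) - 1))
      = u * v * (u * v) - 1 := by
  have huv0 : 0 < u * v := by positivity
  have hM0 : 0 < u * (u * v) := by positivity
  have hN1 : (1:ℕ) ≤ u * v * (u * v) := Nat.one_le_iff_ne_zero.mpr (by positivity)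
  have hle1 : u * v ≤ u * v * (u * v) := Nat.le_mul_of_pos_right _ huv0
  have hle2 : 2 * (u * v) ≤ u * (u * v) := by nlinarith
  have hle3 : (1:ℕ) ≤ 2 * v := by omega
  have hle4 : 2 * v ≤ u * v := by nlinarith
  have hu2' : (2:ℤ) ≤ (u:ℤ) := by exact_mod_cast hu2
  have hv1' : (1:ℤ) ≤ (v:ℤ) := by exact_mod_cast hv1
  set M := u * (u * v) with hMdef
  set N := u * v * (u * v) - 1 with hNdef
  -- numeric identity for the total
  have hid : 2 * (u * v * (u * v) - u * v) = M * (2 * v - 1) + (M - 2 * (u * v)) := by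
    rw [hMdef]; zify [hle1, (show 2 * (u * v) ≤ u * (u * v) from hle2), hle3]; ring
  -- Step 1: each k i divisible by u
  have hdvdu : ∀ i, u ∣ k i := by
    have hdvdtot : u ∣ 2 * (u * v * (u * v) - u * v) :=
      Dvd.dvd.mul_left (Nat.dvd_sub (Dvd.dvd.mul_right (dvd_mul_right u v) _)
        (dvd_mul_right u v)) 2
    have hmod : (∑ i, k i) % u = 0 := by
      obtain ⟨c, hc⟩ := hdvdtot
      rw [hk, hc, Nat.mul_mod_right]
    have hS1 : ∑ i, k i % u = 0 := by
      have e : (∑ i, k i % u) % u = 0 := by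
        rw [← Finset.sum_nat_mod]; exact hmod
      rw [Nat.mod_eq_of_lt h1] at e; exact e
    intro i
    exact Nat.dvd_of_mod_eq_zero
      ((Finset.sum_eq_zero_iff).mp hS1 i (Finset.mem_univ i))
  have hdvdA : ∀ i, u ∣ k i % M := fun i =>
    (Nat.dvd_mod_iff (dvd_mul_right u (u * v))).mpr (hdvdu i)
  -- Step 2: sums of A and B
  have hSA : ∑ i, k i % M = M - 2 * (u * v) := by
    have e : (∑ i, k i % M) % M = (M - 2 * (u * v)) % M := by
      rw [← Finset.sum_nat_mod, hk, hid, Nat.mul_add_mod]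
    rw [Nat.mod_eq_of_lt h2, Nat.mod_eq_of_lt (Nat.sub_lt hM0 (by positivity))] at e
    exact e
  have hsplit : ∑ i, k i % M + M * ∑ i, k i / M = ∑ i, k i := by
    rw [Finset.mul_sum, ← Finset.sum_add_distrib]
    exact Finset.sum_congr rfl fun i _ => Nat.mod_add_div (k i) M
  have hSB : ∑ i, k i / M = 2 * v - 1 := by
    have e := hsplit
    rw [hSA, hk, hid, add_comm (M * (2 * v - 1))] at e
    exact Nat.eq_of_mul_eq_mul_left hM0 (Nat.add_left_cancel e)
  have hSA' : ∑ i, (k i % M) / u = u * v - 2 * v := by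
    have hx : u * ∑ i, (k i % M) / u = ∑ i, k i % M := by
      rw [Finset.mul_sum]
      exact Finset.sum_congr rfl fun i _ => Nat.mul_div_cancel' (hdvdA i)
    rw [hSA] at hx
    have hy : M - 2 * (u * v) = u * (u * v - 2 * v) := by
      rw [hMdef]; zify [(show 2 * (u * v) ≤ u * (u * v) from hle2), hle4]; ring
    exact Nat.eq_of_mul_eq_mul_left (by omega) (hx.trans hy)
  -- bounds
  have hAle : ∀ i, k i % M ≤ M - 2 * (u * v) := fun i =>
    hSA ▸ Finset.single_le_sum (f := fun i => k i % M)
      (fun i _ => Nat.zero_le _) (Finset.mem_univ i)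
  have hBle : ∀ i, k i / M ≤ 2 * v - 1 := fun i =>
    hSB ▸ Finset.single_le_sum (f := fun i => k i / M)
      (fun i _ => Nat.zero_le _) (Finset.mem_univ i)
  have hA'le : ∀ i, (k i % M) / u ≤ u * v - 2 * v := fun i =>
    hSA' ▸ Finset.single_le_sum (f := fun i => (k i % M) / u)
      (fun i _ => Nat.zero_le _) (Finset.mem_univ i)
  -- residue computations
  have hres1 : ∀ i, v * k i % N = v * (k i % M) + k i / M := by
    intro i
    have hki : k i = k i % M + M * (k i / M) := (Nat.mod_add_div (k i) M).symm
    have hEq : v * k i = (v * (k i % M) + k i / M) + N * (k i / M) := by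
      conv_lhs => rw [hki]
      rw [hNdef, hMdef]; zify [hN1]; ring
    have hkey : v * (M - 2 * (u * v)) + (2 * v - 1) < N := by
      rw [hNdef, hMdef]; zify [(show 2 * (u * v) ≤ u * (u * v) from hle2), hle3, hN1]; nlinarith
    have hlt : v * (k i % M) + k i / M < N := by
      have h1' : v * (k i % M) ≤ v * (M - 2 * (u * v)) :=
        Nat.mul_le_mul_left _ (hAle i)
      have h2' := hBle i
      omega
    rw [hEq, Nat.add_mul_mod_self_left, Nat.mod_eq_of_lt hlt]
  have hres2 : ∀ i, u * v * v * k i % N = (k i % M) / u + u * v * (k i / M) := by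
    intro i
    have hau : k i % M = u * ((k i % M) / u) := (Nat.mul_div_cancel' (hdvdA i)).symm
    have hki : k i = u * ((k i % M) / u) + M * (k i / M) := by
      conv_lhs => rw [(Nat.mod_add_div (k i) M).symm, hau]
    have hEq : u * v * v * k i =
        ((k i % M) / u + u * v * (k i / M)) + N * ((k i % M) / u + u * v * (k i / M)) := by
      conv_lhs => rw [hki]
      rw [hNdef, hMdef]; zify [hN1]; ring
    have hkey : (u * v - 2 * v) + u * v * (2 * v - 1) < N := by
      rw [hNdef]; zify [hle3, hle4, hN1]; nlinarith
    have hlt : (k i % M) / u + u * v * (k i / M) < N := by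
      have h1' := hA'le i
      have h2' : u * v * (k i / M) ≤ u * v * (2 * v - 1) :=
        Nat.mul_le_mul_left _ (hBle i)
      omega
    rw [hEq, Nat.add_mul_mod_self_left, Nat.mod_eq_of_lt hlt]
  -- assemble
  calc ∑ i, (v * k i % N + u * v * v * k i % N)
      = ∑ i, ((v * (k i % M) + k i / M) + ((k i % M) / u + u * v * (k i / M))) :=
        Finset.sum_congr rfl fun i _ => by rw [hres1 i, hres2 i]
    _ = (∑ i, (v * (k i % M) + k i / M)) + ∑ i, ((k i % M) / u + u * v * (k i / M)) :=
        Finset.sum_add_distrib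
    _ = (v * ∑ i, k i % M + ∑ i, k i / M) +
        ((∑ i, (k i % M) / u) + u * v * ∑ i, k i / M) := by
        rw [Finset.sum_add_distrib, Finset.sum_add_distrib, Finset.mul_sum, Finset.mul_sum]
    _ = N := by
        rw [hSA, hSB, hSA', hNdef, hMdef]
        zify [(show 2 * (u * v) ≤ u * (u * v) from hle2), hle3, hle4, hN1]; ring


open Finset in
/-- Suppose `k_1 + ⋯ + k_5 = 2(q² − q)` with `q = p^t`, and fix `j` with `1 ≤ j ≤ t`.
If in the base-`p` addition of the `k_i` there is no carry into the `j`-th digit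
position nor into the `(j+t)`-th position (the carry into position `m` being
`(Σ_i (k_i mod p^m)) / p^m`), then
`Σ_i ((p^(t−j) k_i mod (q²−1)) + (p^(2t−j) k_i mod (q²−1))) = q² − 1`. -/
theorem no_carry_twisted_degree_sum (p t q : ℕ) (hp : p.Prime) (ht : 0 < t)
    (hq : q = p ^ t) (k : Fin 5 → ℕ)
    (hk : ∑ i, k i = 2 * (q ^ 2 - q))
    (j : ℕ) (hj1 : 1 ≤ j) (hjt : j ≤ t)
    (hc1 : (∑ i, k i % p ^ j) / p ^ j = 0)
    (hc2 : (∑ i, k i % p ^ (j + t)) / p ^ (j + t) = 0) :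
    ∑ i, (p ^ (t - j) * k i % (q ^ 2 - 1) + p ^ (2 * t - j) * k i % (q ^ 2 - 1)) =
      q ^ 2 - 1 := by
  have hp2 : 2 ≤ p := hp.two_le
  have hu2 : 2 ≤ p ^ j := le_trans hp2 (Nat.le_self_pow (by omega) p)
  have hv1 : 1 ≤ p ^ (t - j) := Nat.one_le_pow _ _ (by omega)
  have hpt : p ^ t = p ^ j * p ^ (t - j) := by rw [← pow_add]; congr 1; omega
  have hpjt : p ^ (j + t) = p ^ j * (p ^ j * p ^ (t - j)) := by
    rw [pow_add, hpt]
  have hp2tj : p ^ (2 * t - j) = p ^ j * p ^ (t - j) * p ^ (t - j) := by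
    rw [show 2 * t - j = t + (t - j) by omega, pow_add, hpt]
  have hq2 : q ^ 2 = p ^ j * p ^ (t - j) * (p ^ j * p ^ (t - j)) := by
    rw [hq, hpt]; ring
  have hq1 : q = p ^ j * p ^ (t - j) := by rw [hq, hpt]
  rw [hq2, hq1] at hk
  rw [hq2, hp2tj]
  refine aux_no_carry (p ^ j) (p ^ (t - j)) hu2 hv1 k hk ?_ ?_
  · exact ((Nat.div_eq_zero_iff).mp hc1).resolve_left (pow_ne_zero _ hp.ne_zero)
  · rw [← hpjt]
    exact ((Nat.div_eq_zero_iff).mp hc2).resolve_left (pow_ne_zero _ hp.ne_zero)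
end
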